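/- arXiv:2605.03240 — 4 statements merged into one kernel-verified Lean document; each statement's English description precedes it below -/
import Mathlib

section
/- The Sinkhorn-EM map never overshoots the truth from positive initializations: for θ > 0 and a ∈ (0,1) with G(θ, a) = α*, one has F(θ, a) ≤ θ* when 0 < θ ≤ θ*, F(θ*, a) = θ* when θ = θ*, and F(θ, a) ≥ θ* when θ ≥ θ*. -/
open MeasureTheory

/-- The standard Gaussian density. -/
noncomputable def stdGauss (y : ℝ) : ℝ :=
  (Real.sqrt (2 * Real.pi))⁻¹ * Real.exp (-y ^ 2 / 2)

/-- Density of the two-component mixture `α*·N(θ*,1) + (1-α*)·N(-θ*,1)`. -/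
noncomputable def mixDen (θs αs y : ℝ) : ℝ :=
  αs * stdGauss (y - θs) + (1 - αs) * stdGauss (y + θs)

/-- The EM/Sinkhorn-EM map `F(θ, α)`. -/
noncomputable def Fmap (θs αs θ α : ℝ) : ℝ :=
  ∫ y, y * (α * Real.exp (θ * y) - (1 - α) * Real.exp (-(θ * y))) /
      (α * Real.exp (θ * y) + (1 - α) * Real.exp (-(θ * y))) * mixDen θs αs y

/-- The tilting equation map `G(θ, α)`. -/
noncomputable def Gmap (θs αs θ α : ℝ) : ℝ :=
  ∫ y, α * Real.exp (θ * y) /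
      (α * Real.exp (θ * y) + (1 - α) * Real.exp (-(θ * y))) * mixDen θs αs y

/-- The (normalized) `θ`-derivative of the tilting equation, `G_θ(θ, α)`. -/
noncomputable def Gtheta (θs αs θ α : ℝ) : ℝ :=
  ∫ y, y / (α * Real.exp (θ * y) + (1 - α) * Real.exp (-(θ * y))) ^ 2 * mixDen θs αs y

namespace SEMaux

lemma stdGauss_pos (y : ℝ) : 0 < stdGauss y := by
  unfold stdGauss
  have h : (0:ℝ) < Real.sqrt (2 * Real.pi) := Real.sqrt_pos.2 (by positivity)
  positivity

lemma continuous_stdGauss : Continuous stdGauss := by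
  unfold stdGauss; fun_prop

lemma integrable_stdGauss : Integrable stdGauss := by
  have h : Integrable (fun y : ℝ => Real.exp (-(1/2) * y^2)) :=
    integrable_exp_neg_mul_sq (by norm_num)
  have h2 := h.const_mul (Real.sqrt (2*Real.pi))⁻¹
  have he : (fun y : ℝ => (Real.sqrt (2*Real.pi))⁻¹ * Real.exp (-(1/2) * y^2)) = stdGauss := by
    funext y; unfold stdGauss; congr 1; ring
  rwa [he] at h2

lemma integrable_mul_stdGauss : Integrable (fun y => y * stdGauss y) := by
  have h : Integrable (fun y : ℝ => y * Real.exp (-(1/2) * y^2)) :=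
    integrable_mul_exp_neg_mul_sq (by norm_num)
  have h2 := h.const_mul (Real.sqrt (2*Real.pi))⁻¹
  have he : (fun y : ℝ => (Real.sqrt (2*Real.pi))⁻¹ * (y * Real.exp (-(1/2) * y^2)))
      = fun y => y * stdGauss y := by
    funext y; unfold stdGauss; rw [show -(1/2:ℝ) * y^2 = -y^2/2 from by ring]; ring
  rwa [he] at h2

lemma integral_stdGauss : ∫ y, stdGauss y = 1 := by
  unfold stdGauss
  rw [integral_const_mul]
  have h : ∫ y : ℝ, Real.exp (-y^2/2) = Real.sqrt (2*Real.pi) := by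
    calc ∫ y : ℝ, Real.exp (-y^2/2) = ∫ y : ℝ, Real.exp (-(1/2)*y^2) := by
          congr 1; funext y; congr 1; ring
    _ = Real.sqrt (Real.pi/(1/2)) := integral_gaussian _
    _ = Real.sqrt (2*Real.pi) := by rw [show Real.pi/(1/2) = 2*Real.pi from by ring]
  rw [h, inv_mul_cancel₀ (ne_of_gt (Real.sqrt_pos.2 (by positivity)))]

lemma integral_mul_stdGauss : ∫ y, y * stdGauss y = 0 := by
  have hg : ∀ x : ℝ, stdGauss (-x) = stdGauss x := fun x => by
    unfold stdGauss; congr 2; ring_nf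
  have h := integral_neg_eq_self (fun y => y * stdGauss y) (volume : Measure ℝ)
  simp only [hg] at h
  rw [show (fun x : ℝ => -x * stdGauss x) = fun x : ℝ => -(x * stdGauss x) from
    funext fun x => by ring, integral_neg] at h
  linarith

lemma stdGauss_shift (θ y : ℝ) :
    stdGauss (y - θ) = Real.exp (θ*y) * Real.exp (-(θ^2)/2) * stdGauss y := by
  unfold stdGauss
  rw [show Real.exp (θ*y) * Real.exp (-(θ^2)/2) *
      ((Real.sqrt (2*Real.pi))⁻¹ * Real.exp (-y^2/2))
      = (Real.sqrt (2*Real.pi))⁻¹ * Real.exp (θ*y + -(θ^2)/2 + -y^2/2) from by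
    rw [Real.exp_add, Real.exp_add]; ring]
  congr 1; ring

lemma integrable_stdGauss_shift (θ : ℝ) : Integrable (fun y => stdGauss (y - θ)) :=
  integrable_stdGauss.comp_sub_right θ

lemma integral_stdGauss_shift (θ : ℝ) : ∫ y, stdGauss (y - θ) = 1 := by
  rw [integral_sub_right_eq_self stdGauss θ]; exact integral_stdGauss

lemma integrable_mul_stdGauss_shift (θ : ℝ) : Integrable (fun y => y * stdGauss (y - θ)) := by
  have h : Integrable (fun x : ℝ => x * stdGauss x + θ * stdGauss x) :=
    integrable_mul_stdGauss.add (integrable_stdGauss.const_mul θ)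
  have h2 := h.comp_sub_right θ
  exact h2.congr (ae_of_all _ fun y => by simp only; ring)

lemma integral_mul_stdGauss_shift (θ : ℝ) : ∫ y, y * stdGauss (y - θ) = θ := by
  calc ∫ y, y * stdGauss (y - θ)
      = ∫ y, ((y - θ) * stdGauss (y - θ) + θ * stdGauss (y - θ)) := by
        congr 1; funext y; ring
    _ = ∫ x, (x * stdGauss x + θ * stdGauss x) :=
        integral_sub_right_eq_self (fun x => x * stdGauss x + θ * stdGauss x) θ
    _ = (∫ x, x * stdGauss x) + ∫ x, θ * stdGauss x :=
        integral_add integrable_mul_stdGauss (integrable_stdGauss.const_mul θ)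
    _ = θ := by rw [integral_mul_stdGauss, integral_const_mul, integral_stdGauss]; ring

lemma integrable_stdGauss_shift' (θ : ℝ) : Integrable (fun y => stdGauss (y + θ)) := by
  have := integrable_stdGauss_shift (-θ); simpa [sub_neg_eq_add] using this

lemma integral_stdGauss_shift' (θ : ℝ) : ∫ y, stdGauss (y + θ) = 1 := by
  have := integral_stdGauss_shift (-θ); simpa [sub_neg_eq_add] using this

lemma integrable_mul_stdGauss_shift' (θ : ℝ) : Integrable (fun y => y * stdGauss (y + θ)) := by
  have := integrable_mul_stdGauss_shift (-θ); simpa [sub_neg_eq_add] using this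

lemma integral_mul_stdGauss_shift' (θ : ℝ) : ∫ y, y * stdGauss (y + θ) = -θ := by
  have := integral_mul_stdGauss_shift (-θ); simpa [sub_neg_eq_add] using this

lemma mixDen_pos {αs : ℝ} (h0 : 0 < αs) (h1 : αs < 1) (θs y : ℝ) : 0 < mixDen θs αs y :=
  add_pos (mul_pos h0 (stdGauss_pos _)) (mul_pos (by linarith) (stdGauss_pos _))

lemma continuous_mixDen (θs αs : ℝ) : Continuous (mixDen θs αs) := by
  unfold mixDen
  exact (continuous_const.mul (continuous_stdGauss.comp (by fun_prop))).add
    (continuous_const.mul (continuous_stdGauss.comp (by fun_prop)))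

lemma integrable_mixDen (θs αs : ℝ) : Integrable (mixDen θs αs) := by
  unfold mixDen
  exact ((integrable_stdGauss_shift θs).const_mul αs).add
    ((integrable_stdGauss_shift' θs).const_mul (1-αs))

lemma integrable_mul_mixDen (θs αs : ℝ) : Integrable (fun y => y * mixDen θs αs y) := by
  have h1 := (integrable_mul_stdGauss_shift θs).const_mul αs
  have h2 := (integrable_mul_stdGauss_shift' θs).const_mul (1-αs)
  exact (h1.add h2).congr (ae_of_all _ fun y => by simp only [Pi.add_apply, mixDen]; ring)

lemma integral_mixDen (θs αs : ℝ) : ∫ y, mixDen θs αs y = 1 := by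
  unfold mixDen
  rw [integral_add ((integrable_stdGauss_shift θs).const_mul αs)
    ((integrable_stdGauss_shift' θs).const_mul (1-αs)),
    integral_const_mul, integral_const_mul, integral_stdGauss_shift, integral_stdGauss_shift']
  ring

noncomputable def den (θ α y : ℝ) : ℝ :=
  α * Real.exp (θ*y) + (1-α) * Real.exp (-(θ*y))

noncomputable def rat (θ α y : ℝ) : ℝ :=
  (α * Real.exp (θ*y) - (1-α) * Real.exp (-(θ*y))) / den θ α y

lemma den_pos {α : ℝ} (h0 : 0 < α) (h1 : α < 1) (θ y : ℝ) : 0 < den θ α y :=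
  add_pos (mul_pos h0 (Real.exp_pos _)) (mul_pos (by linarith) (Real.exp_pos _))

lemma continuous_den (θ α : ℝ) : Continuous (den θ α) := by
  unfold den; fun_prop

lemma continuous_rat {α : ℝ} (h0 : 0 < α) (h1 : α < 1) (θ : ℝ) : Continuous (rat θ α) := by
  unfold rat
  exact Continuous.div (by fun_prop) (continuous_den θ α)
    (fun y => (den_pos h0 h1 θ y).ne')

lemma abs_rat_le {α : ℝ} (h0 : 0 < α) (h1 : α < 1) (θ y : ℝ) : |rat θ α y| ≤ 1 := by
  have hd := den_pos h0 h1 θ y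
  have e1 := Real.exp_pos (θ*y)
  have e2 := Real.exp_pos (-(θ*y))
  rw [rat, abs_div, abs_of_pos hd, div_le_one hd, abs_le]
  unfold den at hd ⊢
  constructor <;> nlinarith

lemma stdGauss_shift' (θ y : ℝ) :
    stdGauss (y + θ) = Real.exp (-(θ*y)) * Real.exp (-(θ^2)/2) * stdGauss y := by
  have h := stdGauss_shift (-θ) y
  rw [sub_neg_eq_add] at h
  rw [h]; congr 2
  · ring_nf
  · ring_nf

lemma mixDen_eq_den (θs αs y : ℝ) :
    mixDen θs αs y = den θs αs y * (Real.exp (-(θs^2)/2) * stdGauss y) := by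
  rw [mixDen, stdGauss_shift θs y, stdGauss_shift' θs y, den]; ring

lemma rat_mul_mixDen {αs : ℝ} (h0 : 0 < αs) (h1 : αs < 1) (θs y : ℝ) :
    rat θs αs y * mixDen θs αs y
      = αs * stdGauss (y - θs) - (1-αs) * stdGauss (y + θs) := by
  have hd : den θs αs y ≠ 0 := (den_pos h0 h1 θs y).ne'
  rw [mixDen_eq_den, rat, stdGauss_shift θs y, stdGauss_shift' θs y]
  field_simp

lemma rat_eq_two_mul {α : ℝ} (h0 : 0 < α) (h1 : α < 1) (θ y : ℝ) :
    rat θ α y = 2 * (α * Real.exp (θ*y) / den θ α y) - 1 := by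
  have hd : den θ α y ≠ 0 := (den_pos h0 h1 θ y).ne'
  rw [rat]
  field_simp
  rw [den]; ring

lemma rat_sub_eq {a αs : ℝ} (ha0 : 0 < a) (ha1 : a < 1) (h0 : 0 < αs) (h1 : αs < 1)
    (θ θs y : ℝ) :
    rat θ a y - rat θs αs y
      = 2 * (Real.exp (Real.log (a*(1-αs)) + (θ*y - θs*y))
          - Real.exp (Real.log (αs*(1-a)) + (θs*y - θ*y))) / (den θ a y * den θs αs y) := by
  have hc : (0:ℝ) < a * (1-αs) := mul_pos ha0 (by linarith)
  have hd : (0:ℝ) < αs * (1-a) := mul_pos h0 (by linarith)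
  have e1 : Real.exp (Real.log (a*(1-αs)) + (θ*y - θs*y))
      = (a*(1-αs)) * (Real.exp (θ*y) * Real.exp (-(θs*y))) := by
    rw [Real.exp_add, Real.exp_log hc, ← Real.exp_add,
      show θ*y + -(θs*y) = θ*y - θs*y from by ring]
  have e2 : Real.exp (Real.log (αs*(1-a)) + (θs*y - θ*y))
      = (αs*(1-a)) * (Real.exp (θs*y) * Real.exp (-(θ*y))) := by
    rw [Real.exp_add, Real.exp_log hd, ← Real.exp_add,
      show θs*y + -(θ*y) = θs*y - θ*y from by ring]
  have hD1 : den θ a y ≠ 0 := (den_pos ha0 ha1 θ y).ne'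
  have hD2 : den θs αs y ≠ 0 := (den_pos h0 h1 θs y).ne'
  rw [e1, e2]
  have hD1' : a * Real.exp (θ*y) + (1-a) * Real.exp (-(θ*y)) ≠ 0 := by
    rw [← den]; exact hD1
  have hD2' : αs * Real.exp (θs*y) + (1-αs) * Real.exp (-(θs*y)) ≠ 0 := by
    rw [← den]; exact hD2
  simp only [rat, den]
  rw [div_sub_div _ _ hD1' hD2']
  ring

end SEMaux

open SEMaux in
/-- the Sinkhorn-EM map never overshoots the truth from positive
initializations: for `θ > 0` and tilted weight `a ∈ (0,1)` with `G(θ, a) = α*`,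
`F(θ, a) ≤ θ*` if `θ ≤ θ*`, `F(θ, a) = θ*` if `θ = θ*`, and `F(θ, a) ≥ θ*` if `θ ≥ θ*`. -/
theorem sinkhornEM_map_no_overshoot
    (θs αs : ℝ) (hθs : 0 < θs) (hαs : 1 / 2 ≤ αs) (hαs1 : αs < 1)
    (θ : ℝ) (hθ : 0 < θ) (a : ℝ) (ha : a ∈ Set.Ioo (0 : ℝ) 1)
    (hG : Gmap θs αs θ a = αs) :
    (θ ≤ θs → Fmap θs αs θ a ≤ θs) ∧
    (θ = θs → Fmap θs αs θ a = θs) ∧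
    (θs ≤ θ → θs ≤ Fmap θs αs θ a) := by
  obtain ⟨ha0, ha1⟩ := ha
  have hα0 : (0:ℝ) < αs := by linarith
  -- integrability facts
  have hmInt : Integrable (mixDen θs αs) := integrable_mixDen θs αs
  have hymInt : Integrable (fun y => y * mixDen θs αs y) := integrable_mul_mixDen θs αs
  have haymInt : Integrable (fun y => |y| * mixDen θs αs y) := by
    refine hymInt.abs.congr (ae_of_all _ fun y => ?_)
    simp only [abs_mul, abs_of_nonneg (mixDen_pos hα0 hαs1 θs y).le]
  have mi : ∀ θ' a', 0 < a' → a' < 1 →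
      Integrable (fun y => rat θ' a' y * mixDen θs αs y) := by
    intro θ' a' h0 h1
    refine hmInt.mono'
      (((continuous_rat h0 h1 θ').mul (continuous_mixDen θs αs)).aestronglyMeasurable)
      (ae_of_all _ fun y => ?_)
    rw [Real.norm_eq_abs, abs_mul, abs_of_nonneg (mixDen_pos hα0 hαs1 θs y).le]
    calc |rat θ' a' y| * mixDen θs αs y ≤ 1 * mixDen θs αs y :=
          mul_le_mul_of_nonneg_right (abs_rat_le h0 h1 θ' y) (mixDen_pos hα0 hαs1 θs y).le
      _ = mixDen θs αs y := one_mul _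
  have mi2 : ∀ θ' a', 0 < a' → a' < 1 →
      Integrable (fun y => y * rat θ' a' y * mixDen θs αs y) := by
    intro θ' a' h0 h1
    refine haymInt.mono'
      (((continuous_id.mul (continuous_rat h0 h1 θ')).mul
        (continuous_mixDen θs αs)).aestronglyMeasurable)
      (ae_of_all _ fun y => ?_)
    rw [Real.norm_eq_abs, abs_mul, abs_mul, abs_of_nonneg (mixDen_pos hα0 hαs1 θs y).le]
    apply mul_le_mul_of_nonneg_right _ (mixDen_pos hα0 hαs1 θs y).le
    calc |y| * |rat θ' a' y| ≤ |y| * 1 :=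
          mul_le_mul_of_nonneg_left (abs_rat_le h0 h1 θ' y) (abs_nonneg y)
      _ = |y| := mul_one _
  have i1 := mi2 θ a ha0 ha1
  have i2 := mi2 θs αs hα0 hαs1
  have i3 := mi θ a ha0 ha1
  have i4 := mi θs αs hα0 hαs1
  -- the exact value at the truth
  have hA : ∫ y, y * rat θs αs y * mixDen θs αs y = θs := by
    have hpt : ∀ y, y * rat θs αs y * mixDen θs αs y
        = αs * (y * stdGauss (y - θs)) - (1-αs) * (y * stdGauss (y + θs)) := fun y => by
      rw [mul_assoc, rat_mul_mixDen hα0 hαs1 θs y]; ring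
    simp only [hpt]
    rw [integral_sub ((integrable_mul_stdGauss_shift θs).const_mul αs)
        ((integrable_mul_stdGauss_shift' θs).const_mul (1-αs)),
      integral_const_mul, integral_const_mul,
      integral_mul_stdGauss_shift, integral_mul_stdGauss_shift']
    ring
  have hB0 : ∫ y, rat θs αs y * mixDen θs αs y = 2*αs - 1 := by
    have hpt : ∀ y, rat θs αs y * mixDen θs αs y
        = αs * stdGauss (y - θs) - (1-αs) * stdGauss (y + θs) := fun y =>
      rat_mul_mixDen hα0 hαs1 θs y
    simp only [hpt]
    rw [integral_sub ((integrable_stdGauss_shift θs).const_mul αs)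
        ((integrable_stdGauss_shift' θs).const_mul (1-αs)),
      integral_const_mul, integral_const_mul,
      integral_stdGauss_shift, integral_stdGauss_shift']
    ring
  -- from the tilting equation
  have hB : ∫ y, rat θ a y * mixDen θs αs y = 2*αs - 1 := by
    have hpm : Integrable (fun y => a * Real.exp (θ*y) /
        (a * Real.exp (θ*y) + (1-a) * Real.exp (-(θ*y))) * mixDen θs αs y) := by
      refine hmInt.mono' ?_ (ae_of_all _ fun y => ?_)
      · apply Continuous.aestronglyMeasurable
        apply Continuous.mul _ (continuous_mixDen θs αs)
        exact Continuous.div (by fun_prop) (by fun_prop)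
          (fun y => (den_pos ha0 ha1 θ y).ne')
      · have hd := den_pos ha0 ha1 θ y
        have he := Real.exp_pos (θ*y)
        have he2 := Real.exp_pos (-(θ*y))
        have hnum : (0:ℝ) ≤ a * Real.exp (θ*y) := by positivity
        have hle : a * Real.exp (θ*y) / den θ a y ≤ 1 := by
          rw [div_le_one hd]; unfold den; nlinarith
        have hge : (0:ℝ) ≤ a * Real.exp (θ*y) / den θ a y := div_nonneg hnum hd.le
        rw [Real.norm_eq_abs, abs_mul, abs_of_nonneg (mixDen_pos hα0 hαs1 θs y).le]
        unfold den at hle hge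
        rw [abs_of_nonneg hge]
        calc _ ≤ 1 * mixDen θs αs y :=
              mul_le_mul_of_nonneg_right hle (mixDen_pos hα0 hαs1 θs y).le
          _ = mixDen θs αs y := one_mul _
    have hpt : ∀ y, rat θ a y * mixDen θs αs y
        = 2 * (a * Real.exp (θ*y) /
            (a * Real.exp (θ*y) + (1-a) * Real.exp (-(θ*y))) * mixDen θs αs y)
          - mixDen θs αs y := fun y => by
      rw [rat_eq_two_mul ha0 ha1 θ y, den]; ring
    simp only [hpt]
    rw [integral_sub (hpm.const_mul 2) hmInt, integral_const_mul, integral_mixDen]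
    have hGv : ∫ y, a * Real.exp (θ*y) /
        (a * Real.exp (θ*y) + (1-a) * Real.exp (-(θ*y))) * mixDen θs αs y = αs := by
      unfold Gmap at hG; exact hG
    rw [hGv]
  -- relating Fmap to rat
  have hFe : Fmap θs αs θ a = ∫ y, y * rat θ a y * mixDen θs αs y := by
    rw [Fmap]; congr 1; funext y; rw [rat, den]; ring
  -- the central splitting identity
  have hsplit : ∀ y₀ : ℝ,
      ∫ y, (y - y₀) * (rat θ a y - rat θs αs y) * mixDen θs αs y
        = Fmap θs αs θ a - θs := by
    intro y₀
    have hre : ∀ y, (y - y₀) * (rat θ a y - rat θs αs y) * mixDen θs αs y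
        = (y * rat θ a y * mixDen θs αs y - y * rat θs αs y * mixDen θs αs y)
          - y₀ * (rat θ a y * mixDen θs αs y - rat θs αs y * mixDen θs αs y) := fun y => by
      ring
    simp only [hre]
    have i12 : Integrable (fun y => y * rat θ a y * mixDen θs αs y
        - y * rat θs αs y * mixDen θs αs y) := i1.sub i2
    have i34 : Integrable (fun y => rat θ a y * mixDen θs αs y
        - rat θs αs y * mixDen θs αs y) := i3.sub i4
    have i34' : Integrable (fun y => y₀ * (rat θ a y * mixDen θs αs y
        - rat θs αs y * mixDen θs αs y)) := i34.const_mul y₀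
    rw [integral_sub i12 i34', integral_sub i1 i2,
      integral_const_mul, integral_sub i3 i4, hA, hB, hB0, ← hFe]
    ring
  set Lc := Real.log (a * (1 - αs)) with hLc
  set Ld := Real.log (αs * (1 - a)) with hLd
  have hc : (0:ℝ) < a * (1-αs) := mul_pos ha0 (by linarith)
  have hd : (0:ℝ) < αs * (1-a) := mul_pos hα0 (by linarith)
  have hDpos : ∀ y, 0 < den θ a y * den θs αs y := fun y =>
    mul_pos (den_pos ha0 ha1 θ y) (den_pos hα0 hαs1 θs y)
  have hsub : ∀ y, rat θ a y - rat θs αs y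
      = 2 * (Real.exp (Lc + (θ*y - θs*y)) - Real.exp (Ld + (θs*y - θ*y)))
        / (den θ a y * den θs αs y) := fun y =>
    rat_sub_eq ha0 ha1 hα0 hαs1 θ θs y
  have hsign_nonneg : ∀ y, Ld + (θs*y - θ*y) ≤ Lc + (θ*y - θs*y) →
      0 ≤ rat θ a y - rat θs αs y := by
    intro y h
    rw [hsub y]
    apply div_nonneg _ (hDpos y).le
    have := Real.exp_le_exp.mpr h
    linarith
  have hsign_nonpos : ∀ y, Lc + (θ*y - θs*y) ≤ Ld + (θs*y - θ*y) →
      rat θ a y - rat θs αs y ≤ 0 := by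
    intro y h
    rw [hsub y]
    apply div_nonpos_of_nonpos_of_nonneg _ (hDpos y).le
    have := Real.exp_le_exp.mpr h
    linarith
  -- equality case
  have key_eq : θ = θs → Fmap θs αs θ a = θs := by
    intro he
    subst he
    have hzero : ∫ y, (rat θ a y - rat θ αs y) * mixDen θ αs y = 0 := by
      have hre : ∀ y, (rat θ a y - rat θ αs y) * mixDen θ αs y
          = rat θ a y * mixDen θ αs y - rat θ αs y * mixDen θ αs y := fun y => by ring
      simp only [hre]
      rw [integral_sub i3 i4, hB, hB0]; ring
    have haeq : a = αs := by
      by_contra hne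
      rcases lt_or_gt_of_ne hne with hlt | hgt
      · -- a < αs : integrand strictly negative
        have hLlt : Lc < Ld := by
          rw [hLc, hLd]
          apply Real.log_lt_log hc
          nlinarith
        have hneg : ∀ y, (rat θ a y - rat θ αs y) * mixDen θ αs y < 0 := by
          intro y
          apply mul_neg_of_neg_of_pos _ (mixDen_pos hα0 hαs1 θ y)
          rw [hsub y]
          apply div_neg_of_neg_of_pos _ (hDpos y)
          have := Real.exp_lt_exp.mpr (show Lc + (θ*y - θ*y) < Ld + (θ*y - θ*y) by linarith)
          linarith
        have hint : Integrable (fun y => -((rat θ a y - rat θ αs y) * mixDen θ αs y)) := by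
          refine ((i3.sub i4).neg).congr (ae_of_all _ fun y => ?_)
          simp only [Pi.neg_apply, Pi.sub_apply]; ring
        have hnn : (0:ℝ → ℝ) ≤ fun y => -((rat θ a y - rat θ αs y) * mixDen θ αs y) :=
          fun y => by have := hneg y; simp only [Pi.zero_apply]; linarith
        have hsupp : Function.support
            (fun y => -((rat θ a y - rat θ αs y) * mixDen θ αs y)) = Set.univ :=
          Set.eq_univ_of_forall fun y => (neg_pos.mpr (hneg y)).ne'
        have hpos := (integral_pos_iff_support_of_nonneg hnn hint).mpr (by
          rw [hsupp]; simp [Real.volume_univ])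
        rw [integral_neg, hzero, neg_zero] at hpos
        exact lt_irrefl _ hpos
      · -- αs < a : integrand strictly positive
        have hLlt : Ld < Lc := by
          rw [hLc, hLd]
          apply Real.log_lt_log hd
          nlinarith
        have hpos' : ∀ y, 0 < (rat θ a y - rat θ αs y) * mixDen θ αs y := by
          intro y
          apply mul_pos _ (mixDen_pos hα0 hαs1 θ y)
          rw [hsub y]
          apply div_pos _ (hDpos y)
          have := Real.exp_lt_exp.mpr (show Ld + (θ*y - θ*y) < Lc + (θ*y - θ*y) by linarith)
          linarith
        have hnn : (0:ℝ → ℝ) ≤ fun y => (rat θ a y - rat θ αs y) * mixDen θ αs y :=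
          fun y => by have := hpos' y; simp only [Pi.zero_apply]; linarith
        have hint : Integrable (fun y => (rat θ a y - rat θ αs y) * mixDen θ αs y) := by
          refine (i3.sub i4).congr (ae_of_all _ fun y => ?_)
          simp only [Pi.sub_apply]; ring
        have hsupp : Function.support
            (fun y => (rat θ a y - rat θ αs y) * mixDen θ αs y) = Set.univ :=
          Set.eq_univ_of_forall fun y => (hpos' y).ne'
        have hpos := (integral_pos_iff_support_of_nonneg hnn hint).mpr (by
          rw [hsupp]; simp [Real.volume_univ])
        rw [hzero] at hpos
        exact lt_irrefl _ hpos
    subst haeq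
    rw [hFe, hA]
  -- strict inequality cases
  have key_lt : θ < θs → Fmap θs αs θ a ≤ θs := by
    intro hlt
    set y₀ := (Ld - Lc) / (2 * (θ - θs)) with hy₀
    have h2 : (2:ℝ) * (θ - θs) < 0 := by linarith
    have hy₀eq : 2 * (θ - θs) * y₀ = Ld - Lc := by
      rw [hy₀, mul_div_cancel₀ _ (ne_of_lt h2)]
    have hpt : ∀ y, (y - y₀) * (rat θ a y - rat θs αs y) * mixDen θs αs y ≤ 0 := by
      intro y
      have hm := (mixDen_pos hα0 hαs1 θs y).le
      rcases le_total y y₀ with h | h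
      · have hmul : 2 * (θ - θs) * y₀ ≤ 2 * (θ - θs) * y :=
          mul_le_mul_of_nonpos_left h h2.le
        have hge := hsign_nonneg y (by nlinarith)
        have h1 : y - y₀ ≤ 0 := by linarith
        exact mul_nonpos_of_nonpos_of_nonneg
          (mul_nonpos_of_nonpos_of_nonneg h1 hge) hm
      · have hmul : 2 * (θ - θs) * y ≤ 2 * (θ - θs) * y₀ :=
          mul_le_mul_of_nonpos_left h h2.le
        have hle := hsign_nonpos y (by nlinarith)
        have h1 : 0 ≤ y - y₀ := by linarith
        exact mul_nonpos_of_nonpos_of_nonneg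
          (mul_nonpos_of_nonneg_of_nonpos h1 hle) hm
    have hI := integral_nonpos (μ := (volume : Measure ℝ)) hpt
    rw [hsplit y₀] at hI
    linarith
  have key_gt : θs < θ → θs ≤ Fmap θs αs θ a := by
    intro hlt
    set y₀ := (Ld - Lc) / (2 * (θ - θs)) with hy₀
    have h2 : (0:ℝ) < 2 * (θ - θs) := by linarith
    have hy₀eq : 2 * (θ - θs) * y₀ = Ld - Lc := by
      rw [hy₀, mul_div_cancel₀ _ (ne_of_gt h2)]
    have hpt : ∀ y, 0 ≤ (y - y₀) * (rat θ a y - rat θs αs y) * mixDen θs αs y := by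
      intro y
      have hm := (mixDen_pos hα0 hαs1 θs y).le
      rcases le_total y y₀ with h | h
      · have hmul : 2 * (θ - θs) * y ≤ 2 * (θ - θs) * y₀ :=
          mul_le_mul_of_nonneg_left h h2.le
        have hle := hsign_nonpos y (by nlinarith)
        have h1 : y - y₀ ≤ 0 := by linarith
        have hx : 0 ≤ (y - y₀) * (rat θ a y - rat θs αs y) := by nlinarith
        exact mul_nonneg hx hm
      · have hmul : 2 * (θ - θs) * y₀ ≤ 2 * (θ - θs) * y :=
          mul_le_mul_of_nonneg_left h h2.le
        have hge := hsign_nonneg y (by nlinarith)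
        have h1 : 0 ≤ y - y₀ := by linarith
        exact mul_nonneg (mul_nonneg h1 hge) hm
    have hI := integral_nonneg (μ := (volume : Measure ℝ))
      (f := fun y => (y - y₀) * (rat θ a y - rat θs αs y) * mixDen θs αs y) hpt
    rw [hsplit y₀] at hI
    linarith
  refine ⟨?_, key_eq, ?_⟩
  · intro hle
    rcases eq_or_lt_of_le hle with he | hlt
    · exact (key_eq he).le
    · exact key_lt hlt
  · intro hge
    rcases eq_or_lt_of_le hge with he | hlt
    · exact (key_eq he.symm).ge
    · exact key_gt hlt
end

section
/- Monotonicity in α of the θ-derivative of the tilting equation: for each θ ≥ 0, the map α ↦ G_θ(θ, α) is nonincreasing on (0,1) (i.e., α ≤ α' implies G_θ(θ,α) ≥ G_θ(θ,α')); and for each θ ≤ 0, the map α ↦ G_θ(θ, α) is nondecreasing on (0,1). -/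
open MeasureTheory

lemma stdGauss_nonneg (y : ℝ) : 0 ≤ stdGauss y := by
  unfold stdGauss; positivity

lemma mixDen_nonneg {θs αs : ℝ} (h0 : 0 ≤ αs) (h1 : αs ≤ 1) (y : ℝ) :
    0 ≤ mixDen θs αs y := by
  unfold mixDen
  have := stdGauss_nonneg (y - θs)
  have := stdGauss_nonneg (y + θs)
  nlinarith

lemma den_pos {α : ℝ} (h0 : 0 < α) (h1 : α < 1) (θ y : ℝ) :
    0 < α * Real.exp (θ * y) + (1 - α) * Real.exp (-(θ * y)) := by
  have e1 := Real.exp_pos (θ * y)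
  have e2 := Real.exp_pos (-(θ * y))
  nlinarith

lemma integrable_gauss_exp (a c : ℝ) :
    Integrable (fun y : ℝ => Real.exp (a * y) * stdGauss (y - c)) := by
  have key : (fun y : ℝ => Real.exp (a * y) * stdGauss (y - c)) =
      fun y : ℝ => ((Real.sqrt (2 * Real.pi))⁻¹ * Real.exp (a * c + a ^ 2 / 2)) *
        Real.exp (-(1/2 : ℝ) * (y - (c + a)) ^ 2) := by
    funext y
    unfold stdGauss
    rw [show Real.exp (a * y) * ((Real.sqrt (2 * Real.pi))⁻¹ * Real.exp (-(y - c) ^ 2 / 2))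
        = (Real.sqrt (2 * Real.pi))⁻¹ * (Real.exp (a * y) * Real.exp (-(y - c) ^ 2 / 2)) by ring,
      ← Real.exp_add,
      show ((Real.sqrt (2 * Real.pi))⁻¹ * Real.exp (a * c + a ^ 2 / 2)) *
        Real.exp (-(1/2 : ℝ) * (y - (c + a)) ^ 2)
        = (Real.sqrt (2 * Real.pi))⁻¹ * (Real.exp (a * c + a ^ 2 / 2) *
          Real.exp (-(1/2 : ℝ) * (y - (c + a)) ^ 2)) by ring,
      ← Real.exp_add]
    congr 1
    ring
  rw [key]
  exact ((integrable_exp_neg_mul_sq (by norm_num : (0:ℝ) < 1/2)).comp_sub_right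
    (c + a)).const_mul _

lemma integrable_bound (a : ℝ) {θs αs : ℝ} (h0 : 0 ≤ αs) (h1 : αs ≤ 1) :
    Integrable (fun y : ℝ =>
      (Real.exp (a * y) + Real.exp (-(a * y))) * mixDen θs αs y) := by
  have h1' : Integrable (fun y : ℝ => Real.exp (a * y) * stdGauss (y - θs)) :=
    integrable_gauss_exp a θs
  have h2' : Integrable (fun y : ℝ => Real.exp (-a * y) * stdGauss (y - θs)) :=
    integrable_gauss_exp (-a) θs
  have h3' : Integrable (fun y : ℝ => Real.exp (a * y) * stdGauss (y - -θs)) :=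
    integrable_gauss_exp a (-θs)
  have h4' : Integrable (fun y : ℝ => Real.exp (-a * y) * stdGauss (y - -θs)) :=
    integrable_gauss_exp (-a) (-θs)
  have key : (fun y : ℝ => (Real.exp (a * y) + Real.exp (-(a * y))) * mixDen θs αs y) =
      fun y : ℝ => (αs * (Real.exp (a * y) * stdGauss (y - θs)) +
        (1 - αs) * (Real.exp (a * y) * stdGauss (y - -θs))) +
        (αs * (Real.exp (-a * y) * stdGauss (y - θs)) +
        (1 - αs) * (Real.exp (-a * y) * stdGauss (y - -θs))) := by
    funext y
    unfold mixDen
    rw [show y - -θs = y + θs by ring, show -a * y = -(a * y) by ring]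
    ring
  rw [key]
  exact ((h1'.const_mul _).add (h3'.const_mul _)).add
    ((h2'.const_mul _).add (h4'.const_mul _))

lemma den_lower {α : ℝ} (h0 : 0 < α) (h1 : α < 1) (θ y : ℝ) :
    Real.exp (-(|θ| * |y|)) ≤ α * Real.exp (θ * y) + (1 - α) * Real.exp (-(θ * y)) := by
  have habs : |θ * y| = |θ| * |y| := abs_mul θ y
  have hle1 : Real.exp (-(|θ| * |y|)) ≤ Real.exp (θ * y) := by
    apply Real.exp_le_exp.2
    rw [← habs]
    exact neg_abs_le _
  have hle2 : Real.exp (-(|θ| * |y|)) ≤ Real.exp (-(θ * y)) := by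
    apply Real.exp_le_exp.2
    rw [← habs]
    have := neg_abs_le (-(θ * y))
    simpa [abs_neg] using this
  nlinarith

lemma integrable_integrand {θs αs : ℝ} (h0 : 0 ≤ αs) (h1 : αs ≤ 1)
    (θ : ℝ) {α : ℝ} (hα : α ∈ Set.Ioo (0:ℝ) 1) :
    Integrable (fun y : ℝ =>
      y / (α * Real.exp (θ * y) + (1 - α) * Real.exp (-(θ * y))) ^ 2 * mixDen θs αs y) := by
  obtain ⟨hα0, hα1⟩ := hα
  set a : ℝ := 2 * |θ| + 1 with ha
  apply Integrable.mono (g := fun y : ℝ =>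
    (Real.exp (a * y) + Real.exp (-(a * y))) * mixDen θs αs y)
    (integrable_bound a h0 h1)
  · -- measurability
    apply Continuous.aestronglyMeasurable
    apply Continuous.mul
    · apply Continuous.div continuous_id
      · exact (((continuous_const.mul ((continuous_const.mul continuous_id).rexp)).add
          ((continuous_const.mul ((continuous_const.mul continuous_id).neg.rexp)))).pow 2)
      · intro y
        exact ne_of_gt (pow_pos (den_pos hα0 hα1 θ y) 2)
    · unfold mixDen stdGauss
      fun_prop
  · filter_upwards with y
    have hD := den_pos hα0 hα1 θ y
    have hmix := mixDen_nonneg (θs := θs) h0 h1 y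
    have hbound : Real.exp (a * |y|) ≤ Real.exp (a * y) + Real.exp (-(a * y)) := by
      rcases le_total 0 y with hy | hy
      · rw [abs_of_nonneg hy]
        have := Real.exp_pos (-(a * y)); linarith
      · rw [abs_of_nonpos hy]
        have := Real.exp_pos (a * y)
        have : Real.exp (a * -y) = Real.exp (-(a * y)) := by ring_nf
        rw [this]
        have := Real.exp_pos (a * y); linarith
    have hstep : |y| / (α * Real.exp (θ * y) + (1 - α) * Real.exp (-(θ * y))) ^ 2
        ≤ Real.exp (a * |y|) := by
      have hlow := den_lower hα0 hα1 θ y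
      have hexp_pos : (0:ℝ) < Real.exp (-(|θ| * |y|)) := Real.exp_pos _
      have hsq : Real.exp (-(|θ| * |y|)) ^ 2
          ≤ (α * Real.exp (θ * y) + (1 - α) * Real.exp (-(θ * y))) ^ 2 := by
        nlinarith
      have hinv : ((α * Real.exp (θ * y) + (1 - α) * Real.exp (-(θ * y))) ^ 2)⁻¹
          ≤ (Real.exp (-(|θ| * |y|)) ^ 2)⁻¹ := by
        apply inv_anti₀ (by positivity) hsq
      have hysmall : |y| ≤ Real.exp |y| := by
        have := Real.add_one_le_exp |y|
        linarith
      calc |y| / (α * Real.exp (θ * y) + (1 - α) * Real.exp (-(θ * y))) ^ 2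
          = |y| * ((α * Real.exp (θ * y) + (1 - α) * Real.exp (-(θ * y))) ^ 2)⁻¹ := by
            rw [div_eq_mul_inv]
        _ ≤ Real.exp |y| * (Real.exp (-(|θ| * |y|)) ^ 2)⁻¹ := by
            apply mul_le_mul hysmall hinv (by positivity) (le_of_lt (Real.exp_pos _))
        _ = Real.exp (a * |y|) := by
            rw [← Real.exp_nat_mul, ← Real.exp_neg, ← Real.exp_add]
            congr 1
            push_cast
            ring
    rw [norm_mul, norm_div]
    simp only [Real.norm_eq_abs]
    rw [abs_of_nonneg hmix, abs_of_nonneg (le_of_lt (pow_pos hD 2))]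
    calc |y| / (α * Real.exp (θ * y) + (1 - α) * Real.exp (-(θ * y))) ^ 2 * mixDen θs αs y
        ≤ Real.exp (a * |y|) * mixDen θs αs y := by
          apply mul_le_mul_of_nonneg_right hstep hmix
      _ ≤ (Real.exp (a * y) + Real.exp (-(a * y))) * mixDen θs αs y := by
          apply mul_le_mul_of_nonneg_right hbound hmix
      _ ≤ |(Real.exp (a * y) + Real.exp (-(a * y))) * mixDen θs αs y| := le_abs_self _

lemma pointwise_key {α α' : ℝ} (hα : α ∈ Set.Ioo (0:ℝ) 1) (hα' : α' ∈ Set.Ioo (0:ℝ) 1)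
    (hle : α ≤ α') (θ y : ℝ) (hθ : 0 ≤ θ) :
    y / (α' * Real.exp (θ * y) + (1 - α') * Real.exp (-(θ * y))) ^ 2
      ≤ y / (α * Real.exp (θ * y) + (1 - α) * Real.exp (-(θ * y))) ^ 2 := by
  obtain ⟨h0, h1⟩ := hα
  obtain ⟨h0', h1'⟩ := hα'
  have hD := den_pos h0 h1 θ y
  have hD' := den_pos h0' h1' θ y
  rw [div_le_div_iff₀ (by positivity) (by positivity)]
  rcases le_total 0 y with hy | hy
  · -- θ * y ≥ 0: exp(θy) ≥ exp(-θy), so D ≤ D'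
    have he : Real.exp (-(θ * y)) ≤ Real.exp (θ * y) := by
      apply Real.exp_le_exp.2; nlinarith
    have hDD : α * Real.exp (θ * y) + (1 - α) * Real.exp (-(θ * y))
        ≤ α' * Real.exp (θ * y) + (1 - α') * Real.exp (-(θ * y)) := by nlinarith
    exact mul_le_mul_of_nonneg_left (pow_le_pow_left₀ hD.le hDD 2) hy
  · have he : Real.exp (θ * y) ≤ Real.exp (-(θ * y)) := by
      apply Real.exp_le_exp.2; nlinarith
    have hDD : α' * Real.exp (θ * y) + (1 - α') * Real.exp (-(θ * y))
        ≤ α * Real.exp (θ * y) + (1 - α) * Real.exp (-(θ * y)) := by nlinarith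
    exact mul_le_mul_of_nonpos_left (pow_le_pow_left₀ hD'.le hDD 2) hy

lemma pointwise_key' {α α' : ℝ} (hα : α ∈ Set.Ioo (0:ℝ) 1) (hα' : α' ∈ Set.Ioo (0:ℝ) 1)
    (hle : α ≤ α') (θ y : ℝ) (hθ : θ ≤ 0) :
    y / (α * Real.exp (θ * y) + (1 - α) * Real.exp (-(θ * y))) ^ 2
      ≤ y / (α' * Real.exp (θ * y) + (1 - α') * Real.exp (-(θ * y))) ^ 2 := by
  obtain ⟨h0, h1⟩ := hα
  obtain ⟨h0', h1'⟩ := hα'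
  have hD := den_pos h0 h1 θ y
  have hD' := den_pos h0' h1' θ y
  rw [div_le_div_iff₀ (by positivity) (by positivity)]
  rcases le_total 0 y with hy | hy
  · have he : Real.exp (θ * y) ≤ Real.exp (-(θ * y)) := by
      apply Real.exp_le_exp.2; nlinarith
    have hDD : α' * Real.exp (θ * y) + (1 - α') * Real.exp (-(θ * y))
        ≤ α * Real.exp (θ * y) + (1 - α) * Real.exp (-(θ * y)) := by nlinarith
    exact mul_le_mul_of_nonneg_left (pow_le_pow_left₀ hD'.le hDD 2) hy
  · have he : Real.exp (-(θ * y)) ≤ Real.exp (θ * y) := by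
      apply Real.exp_le_exp.2; nlinarith
    have hDD : α * Real.exp (θ * y) + (1 - α) * Real.exp (-(θ * y))
        ≤ α' * Real.exp (θ * y) + (1 - α') * Real.exp (-(θ * y)) := by nlinarith
    exact mul_le_mul_of_nonpos_left (pow_le_pow_left₀ hD.le hDD 2) hy

/-- monotonicity in `α` of `G_θ(θ, ·)`: it is nonincreasing on `(0,1)`
for each `θ ≥ 0` and nondecreasing on `(0,1)` for each `θ ≤ 0`. -/
theorem Gtheta_monotonicity_in_alpha
    (θs αs : ℝ) (hθs : 0 < θs) (hαs : 1 / 2 < αs) (hαs1 : αs < 1) :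
    (∀ θ : ℝ, 0 ≤ θ → ∀ α ∈ Set.Ioo (0 : ℝ) 1, ∀ α' ∈ Set.Ioo (0 : ℝ) 1,
      α ≤ α' → Gtheta θs αs θ α' ≤ Gtheta θs αs θ α) ∧
    (∀ θ : ℝ, θ ≤ 0 → ∀ α ∈ Set.Ioo (0 : ℝ) 1, ∀ α' ∈ Set.Ioo (0 : ℝ) 1,
      α ≤ α' → Gtheta θs αs θ α ≤ Gtheta θs αs θ α') := by
  have h0 : (0:ℝ) ≤ αs := by linarith
  have h1 : αs ≤ 1 := le_of_lt hαs1
  constructor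
  · intro θ hθ α hα α' hα' hle
    apply integral_mono (integrable_integrand h0 h1 θ hα') (integrable_integrand h0 h1 θ hα)
    intro y
    exact mul_le_mul_of_nonneg_right (pointwise_key hα hα' hle θ y hθ)
      (mixDen_nonneg h0 h1 y)
  · intro θ hθ α hα α' hα' hle
    apply integral_mono (integrable_integrand h0 h1 θ hα) (integrable_integrand h0 h1 θ hα')
    intro y
    exact mul_le_mul_of_nonneg_right (pointwise_key' hα hα' hle θ y hθ)
      (mixDen_nonneg h0 h1 y)
end

section
/- Sign of the θ-derivative of the tilting equation on the negative half-line: if θ ≤ 0 and α ∈ (1/2, 1), then G_θ(θ, α) ≥ 0. -/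
open MeasureTheory

lemma stdGauss_pos (y : ℝ) : 0 < stdGauss y := by
  unfold stdGauss
  positivity

lemma stdGauss_neg (y : ℝ) : stdGauss (-y) = stdGauss y := by
  unfold stdGauss
  rw [neg_pow]
  norm_num

lemma stdGauss_le {a b : ℝ} (h : a ^ 2 ≤ b ^ 2) : stdGauss b ≤ stdGauss a := by
  unfold stdGauss
  have : Real.exp (-b ^ 2 / 2) ≤ Real.exp (-a ^ 2 / 2) := by
    apply Real.exp_le_exp.2; linarith
  have h0 : (0:ℝ) < (Real.sqrt (2 * Real.pi))⁻¹ := by positivity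
  nlinarith

lemma mixDen_pos (θs αs y : ℝ) (hαs : 1 / 2 < αs) (hαs1 : αs < 1) :
    0 < mixDen θs αs y := by
  unfold mixDen
  have h1 := stdGauss_pos (y - θs)
  have h2 := stdGauss_pos (y + θs)
  nlinarith

lemma key_ratio (θs αs : ℝ) (hθs : 0 < θs) (hαs : 1 / 2 < αs) (hαs1 : αs < 1)
    (θ : ℝ) (hθ : θ ≤ 0) (α : ℝ) (hα : 1 / 2 < α) (hα1 : α < 1)
    (y : ℝ) (hy : 0 ≤ y) :
    mixDen θs αs (-y) / (α * Real.exp (θ * -y) + (1 - α) * Real.exp (-(θ * -y))) ^ 2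
      ≤ mixDen θs αs y / (α * Real.exp (θ * y) + (1 - α) * Real.exp (-(θ * y))) ^ 2 := by
  have hq : mixDen θs αs (-y) ≤ mixDen θs αs y := by
    unfold mixDen
    have e1 : -y - θs = -(y + θs) := by ring
    have e2 : -y + θs = -(y - θs) := by ring
    rw [e1, e2, stdGauss_neg, stdGauss_neg]
    have h1 : stdGauss (y + θs) ≤ stdGauss (y - θs) := by
      apply stdGauss_le; nlinarith
    nlinarith
  have hDpos : 0 < α * Real.exp (θ * y) + (1 - α) * Real.exp (-(θ * y)) := by
    have := Real.exp_pos (θ * y); have := Real.exp_pos (-(θ * y)); nlinarith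
  have hDle : α * Real.exp (θ * y) + (1 - α) * Real.exp (-(θ * y))
      ≤ α * Real.exp (θ * -y) + (1 - α) * Real.exp (-(θ * -y)) := by
    have e1 : θ * -y = -(θ * y) := by ring
    have e2 : -(θ * -y) = θ * y := by ring
    rw [e1, neg_neg]
    have hle : Real.exp (θ * y) ≤ Real.exp (-(θ * y)) := by
      apply Real.exp_le_exp.2; nlinarith
    nlinarith
  have hq0 : 0 < mixDen θs αs y := mixDen_pos θs αs y hαs hαs1
  apply div_le_div₀ hq0.le hq (by positivity)
  exact pow_le_pow_left₀ hDpos.le hDle 2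

lemma key_pointwise (θs αs : ℝ) (hθs : 0 < θs) (hαs : 1 / 2 < αs) (hαs1 : αs < 1)
    (θ : ℝ) (hθ : θ ≤ 0) (α : ℝ) (hα : 1 / 2 < α) (hα1 : α < 1)
    (y : ℝ) :
    0 ≤ y / (α * Real.exp (θ * y) + (1 - α) * Real.exp (-(θ * y))) ^ 2 * mixDen θs αs y
      + (-y) / (α * Real.exp (θ * -y) + (1 - α) * Real.exp (-(θ * -y))) ^ 2
          * mixDen θs αs (-y) := by
  set g : ℝ → ℝ := fun t =>
    mixDen θs αs t / (α * Real.exp (θ * t) + (1 - α) * Real.exp (-(θ * t))) ^ 2 with hg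
  have hform : y / (α * Real.exp (θ * y) + (1 - α) * Real.exp (-(θ * y))) ^ 2 * mixDen θs αs y
      + (-y) / (α * Real.exp (θ * -y) + (1 - α) * Real.exp (-(θ * -y))) ^ 2
          * mixDen θs αs (-y) = y * (g y - g (-y)) := by
    simp only [hg]
    ring
  rw [hform]
  rcases le_or_gt 0 y with hy | hy
  · have := key_ratio θs αs hθs hαs hαs1 θ hθ α hα hα1 y hy
    simp only [hg] at this ⊢
    nlinarith
  · have := key_ratio θs αs hθs hαs hαs1 θ hθ α hα hα1 (-y) (by linarith)
    rw [neg_neg] at this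
    simp only [hg] at this ⊢
    nlinarith

/-- sign of `G_θ` on the negative half-line: if `θ ≤ 0` and
`α ∈ (1/2, 1)`, then `G_θ(θ, α) ≥ 0`. -/
theorem Gtheta_nonneg_on_negative_halfline
    (θs αs : ℝ) (hθs : 0 < θs) (hαs : 1 / 2 < αs) (hαs1 : αs < 1)
    (θ : ℝ) (hθ : θ ≤ 0) (α : ℝ) (hα : 1 / 2 < α) (hα1 : α < 1) :
    0 ≤ Gtheta θs αs θ α := by
  unfold Gtheta
  set f : ℝ → ℝ := fun y =>
    y / (α * Real.exp (θ * y) + (1 - α) * Real.exp (-(θ * y))) ^ 2 * mixDen θs αs y with hf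
  by_cases hint : Integrable f
  · have hneg : Integrable (fun y => f (-y)) := hint.comp_neg
    have h2 : ∫ y, f (-y) = ∫ y, f y := integral_neg_eq_self f volume
    have hsum : 0 ≤ ∫ y, (f y + f (-y)) := by
      apply integral_nonneg
      intro y
      have := key_pointwise θs αs hθs hαs hαs1 θ hθ α hα hα1 y
      simpa [hf] using this
    rw [integral_add hint hneg, h2] at hsum
    linarith
  · rw [integral_undef hint]
end

section
/- Sign of the θ-derivative of the tilting equation beyond the truth: if θ ≥ θ* and α ∈ [α*, 1), then G_θ(θ, α) ≤ 0. -/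
open MeasureTheory

/-- Key polynomial inequality. -/
lemma aux_poly (αs α a b s t : ℝ) (hb : 0 < b) (hab : b ≤ a) (ht : 0 < t)
    (hst : t ≤ s) (hr : a * t ≤ s * b) (hαs : 1 / 2 < αs) (hα : αs ≤ α) (hα1 : α < 1) :
    (αs * a + (1 - αs) * b) * ((1 - α) * s + α * t) ^ 2 ≤
      ((1 - αs) * a + αs * b) * (α * s + (1 - α) * t) ^ 2 := by
  have ha : 0 < a := lt_of_lt_of_le hb hab
  have hs : 0 < s := lt_of_lt_of_le ht hst
  have hA : 0 ≤ αs * a + (1 - αs) * b := by nlinarith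
  have hB : 0 ≤ (1 - αs) * a + αs * b := by nlinarith
  have hC : 0 ≤ α * s + (1 - α) * t := by nlinarith
  have hD : 0 ≤ (1 - α) * s + α * t := by nlinarith
  have hbt : b * t ≤ a * s := mul_le_mul hab hst ht.le ha.le
  have hBC : (αs * a + (1 - αs) * b) * ((1 - α) * s + α * t) ≤
      ((1 - αs) * a + αs * b) * (α * s + (1 - α) * t) := by
    nlinarith [mul_nonneg (by linarith : (0:ℝ) ≤ α - αs) (by linarith : (0:ℝ) ≤ a * s - b * t),
      mul_nonneg (by linarith : (0:ℝ) ≤ αs + α - 1) (by linarith : (0:ℝ) ≤ s * b - a * t)]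
  have hDC : (1 - α) * s + α * t ≤ α * s + (1 - α) * t := by nlinarith
  calc (αs * a + (1 - αs) * b) * ((1 - α) * s + α * t) ^ 2
      = ((αs * a + (1 - αs) * b) * ((1 - α) * s + α * t)) * ((1 - α) * s + α * t) := by ring
    _ ≤ (((1 - αs) * a + αs * b) * (α * s + (1 - α) * t)) * ((1 - α) * s + α * t) :=
        mul_le_mul_of_nonneg_right hBC hD
    _ ≤ (((1 - αs) * a + αs * b) * (α * s + (1 - α) * t)) * (α * s + (1 - α) * t) :=
        mul_le_mul_of_nonneg_left hDC (mul_nonneg hB hC)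
    _ = ((1 - αs) * a + αs * b) * (α * s + (1 - α) * t) ^ 2 := by ring

lemma mixDen_eq (θs αs z : ℝ) :
    mixDen θs αs z = (Real.sqrt (2 * Real.pi))⁻¹ * Real.exp (-(z ^ 2 + θs ^ 2) / 2) *
      (αs * Real.exp (θs * z) + (1 - αs) * Real.exp (-(θs * z))) := by
  unfold mixDen stdGauss
  have e1 : -(z - θs) ^ 2 / 2 = -(z ^ 2 + θs ^ 2) / 2 + θs * z := by ring
  have e2 : -(z + θs) ^ 2 / 2 = -(z ^ 2 + θs ^ 2) / 2 + -(θs * z) := by ring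
  rw [e1, e2, Real.exp_add, Real.exp_add]
  ring

lemma pointwise_nonneg_case (θs αs θ α : ℝ) (hθs : 0 < θs) (hαs : 1 / 2 < αs)
    (hθ : θs ≤ θ) (hα : αs ≤ α) (hα1 : α < 1) (y : ℝ) (hy : 0 ≤ y) :
    y / (α * Real.exp (θ * y) + (1 - α) * Real.exp (-(θ * y))) ^ 2 * mixDen θs αs y +
      (-y) / (α * Real.exp (θ * (-y)) + (1 - α) * Real.exp (-(θ * (-y)))) ^ 2 *
        mixDen θs αs (-y) ≤ 0 := by
  have hθpos : 0 < θ := lt_of_lt_of_le hθs hθ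
  set a := Real.exp (θs * y) with ha_def
  set b := Real.exp (-(θs * y)) with hb_def
  set s := Real.exp (θ * y) with hs_def
  set t := Real.exp (-(θ * y)) with ht_def
  set K := (Real.sqrt (2 * Real.pi))⁻¹ * Real.exp (-(y ^ 2 + θs ^ 2) / 2) with hK_def
  have hb : 0 < b := Real.exp_pos _
  have ht : 0 < t := Real.exp_pos _
  have hab : b ≤ a := Real.exp_le_exp.2 (by nlinarith [mul_nonneg hθs.le hy])
  have hst : t ≤ s := Real.exp_le_exp.2 (by nlinarith [mul_nonneg hθpos.le hy])
  have hr : a * t ≤ s * b := by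
    rw [ha_def, hb_def, hs_def, ht_def, ← Real.exp_add, ← Real.exp_add]
    exact Real.exp_le_exp.2 (by nlinarith [mul_nonneg (by linarith : (0:ℝ) ≤ θ - θs) hy])
  have hK : 0 ≤ K := by positivity
  have hmy : mixDen θs αs y = K * (αs * a + (1 - αs) * b) := by
    rw [mixDen_eq]
  have hmny : mixDen θs αs (-y) = K * (αs * b + (1 - αs) * a) := by
    rw [mixDen_eq]
    have e1 : θs * (-y) = -(θs * y) := by ring
    have e3 : (-y) ^ 2 = y ^ 2 := by ring
    rw [e1, e3, neg_neg]
  have hd1 : α * Real.exp (θ * (-y)) + (1 - α) * Real.exp (-(θ * (-y)))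
      = (1 - α) * s + α * t := by
    have e1 : θ * (-y) = -(θ * y) := by ring
    rw [e1, neg_neg]; ring
  rw [hmy, hmny, hd1]
  have key : (αs * a + (1 - αs) * b) * ((1 - α) * s + α * t) ^ 2 ≤
      ((1 - αs) * a + αs * b) * (α * s + (1 - α) * t) ^ 2 :=
    aux_poly αs α a b s t hb hab ht hst hr hαs hα hα1
  have hDy : 0 < α * s + (1 - α) * t := by nlinarith
  have hDm : 0 < (1 - α) * s + α * t := by nlinarith
  have frac : (αs * a + (1 - αs) * b) / (α * s + (1 - α) * t) ^ 2 ≤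
      ((1 - αs) * a + αs * b) / ((1 - α) * s + α * t) ^ 2 := by
    rw [div_le_div_iff₀ (pow_pos hDy 2) (pow_pos hDm 2)]
    exact key
  have main : y / (α * s + (1 - α) * t) ^ 2 * (K * (αs * a + (1 - αs) * b)) ≤
      y / ((1 - α) * s + α * t) ^ 2 * (K * (αs * b + (1 - αs) * a)) := by
    have h := mul_le_mul_of_nonneg_left frac (mul_nonneg hy hK)
    calc y / (α * s + (1 - α) * t) ^ 2 * (K * (αs * a + (1 - αs) * b))
        = (y * K) * ((αs * a + (1 - αs) * b) / (α * s + (1 - α) * t) ^ 2) := by ring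
      _ ≤ (y * K) * (((1 - αs) * a + αs * b) / ((1 - α) * s + α * t) ^ 2) := h
      _ = y / ((1 - α) * s + α * t) ^ 2 * (K * (αs * b + (1 - αs) * a)) := by ring
  have : (-y) / ((1 - α) * s + α * t) ^ 2 * (K * (αs * b + (1 - αs) * a)) =
      -(y / ((1 - α) * s + α * t) ^ 2 * (K * (αs * b + (1 - αs) * a))) := by ring
  rw [this]
  linarith

lemma pointwise_all (θs αs θ α : ℝ) (hθs : 0 < θs) (hαs : 1 / 2 < αs)
    (hθ : θs ≤ θ) (hα : αs ≤ α) (hα1 : α < 1) (y : ℝ) :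
    y / (α * Real.exp (θ * y) + (1 - α) * Real.exp (-(θ * y))) ^ 2 * mixDen θs αs y +
      (-y) / (α * Real.exp (θ * (-y)) + (1 - α) * Real.exp (-(θ * (-y)))) ^ 2 *
        mixDen θs αs (-y) ≤ 0 := by
  rcases le_total 0 y with hy | hy
  · exact pointwise_nonneg_case θs αs θ α hθs hαs hθ hα hα1 y hy
  · have h := pointwise_nonneg_case θs αs θ α hθs hαs hθ hα hα1 (-y) (by linarith)
    rw [neg_neg] at h
    linarith

/-- sign of `G_θ` beyond the truth: if `θ ≥ θ*` and `α ∈ [α*, 1)`,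
then `G_θ(θ, α) ≤ 0`. -/
theorem Gtheta_nonpos_beyond_truth
    (θs αs : ℝ) (hθs : 0 < θs) (hαs : 1 / 2 < αs) (hαs1 : αs < 1)
    (θ : ℝ) (hθ : θs ≤ θ) (α : ℝ) (hα : αs ≤ α) (hα1 : α < 1) :
    Gtheta θs αs θ α ≤ 0 := by
  set f : ℝ → ℝ := fun y =>
    y / (α * Real.exp (θ * y) + (1 - α) * Real.exp (-(θ * y))) ^ 2 * mixDen θs αs y with hf_def
  have hG : Gtheta θs αs θ α = ∫ y, f y := rfl
  rw [hG]
  by_cases hf : Integrable f (volume : Measure ℝ)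
  · have hfn : Integrable (fun y => f (-y)) (volume : Measure ℝ) := hf.comp_neg
    have h1 : (∫ y, f (-y)) = ∫ y, f y := integral_neg_eq_self f _
    have h2 : (∫ y, (f y + f (-y))) = (∫ y, f y) + ∫ y, f (-y) := integral_add hf hfn
    have h3 : (∫ y, (f y + f (-y))) ≤ 0 := by
      apply integral_nonpos
      intro y
      exact pointwise_all θs αs θ α hθs hαs hθ hα hα1 y
    linarith
  · rw [integral_undef hf]
end
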